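/- Let n > m ≥ 1 and k', l' ≥ 0, and set N = m + n + k' + l'. There is no lattice word of content (n, m+1, 1^{k'+l'-1}) arising as the reading word of a semistandard filling of the ribbon (n, 1^{k'}, m, 1^{l'}); concretely: in any semistandard Young tableau of ribbon shape (n, 1^{k'}, m, 1^{l'}) whose reading word is lattice, the top row contains only 1s, and consequently the tableau contains at most n + m occurrences of entries from {1, 2} with at most m occurrences of 2, so its content cannot equal (n, m+1, 1^{k'+l'-1}). -/

import Mathlib

/-- The reading word (right to left, top to bottom) of a filling of the ribbon
`(n, 1^{k'}, m, 1^{l'})`, where `r1` is the top row (length `n`), `c1` the following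
`k'` singleton rows, `r2` the row of length `m`, and `c2` the final `l'` singleton rows. -/
def readWord17 (r1 c1 r2 c2 : List ℕ) : List ℕ :=
  r1.reverse ++ c1 ++ r2.reverse ++ c2

/-- In any semistandard filling of the ribbon `(n, 1^{k'}, m, 1^{l'})` (with `n > m ≥ 1`)
whose reading word is lattice, the top row contains only 1s, and the content of the
filling cannot equal `(n, m+1, 1^{k'+l'-1})`. -/
theorem stmt17 (n m k' l' : ℕ) (hm : 1 ≤ m) (hmn : m < n)
    (r1 c1 r2 c2 : List ℕ)
    (hr1len : r1.length = n) (hc1len : c1.length = k')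
    (hr2len : r2.length = m) (hc2len : c2.length = l')
    (hpos : ∀ x ∈ readWord17 r1 c1 r2 c2, 1 ≤ x)
    (hr1row : r1.Chain' (· ≤ ·)) (hr2row : r2.Chain' (· ≤ ·))
    (hcol1 : (r1.getLastD 0 :: (c1 ++ [r2.getLastD 0])).Chain' (· < ·))
    (hcol2 : (r2.headD 0 :: c2).Chain' (· < ·))
    (hlat : ∀ j i, 1 ≤ i →
      ((readWord17 r1 c1 r2 c2).take j).count (i + 1) ≤
        ((readWord17 r1 c1 r2 c2).take j).count i) :
    (∀ x ∈ r1, x = 1) ∧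
    ¬((readWord17 r1 c1 r2 c2).count 1 = n ∧
      (readWord17 r1 c1 r2 c2).count 2 = m + 1 ∧
      (∀ i, 3 ≤ i → i ≤ k' + l' + 1 → (readWord17 r1 c1 r2 c2).count i = 1) ∧
      (∀ i, k' + l' + 1 < i → (readWord17 r1 c1 r2 c2).count i = 0)) := by
  have hr1ne : r1 ≠ [] := by
    intro h; rw [h] at hr1len; simp at hr1len; omega
  have hr2ne : r2 ≠ [] := by
    intro h; rw [h] at hr2len; simp at hr2len; omega
  set a := r1.getLast hr1ne with ha
  have hr1eq : r1.dropLast ++ [a] = r1 := List.dropLast_append_getLast hr1ne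
  have hrev : r1.reverse = a :: r1.dropLast.reverse := by
    conv_lhs => rw [← hr1eq]
    simp
  -- first element of word is a
  have htake : (readWord17 r1 c1 r2 c2).take 1 = [a] := by
    simp [readWord17, hrev]
  have hamem : a ∈ readWord17 r1 c1 r2 c2 := by
    simp [readWord17, hrev]
  -- a = 1
  have ha1 : a = 1 := by
    by_contra hne
    have ha2 : 2 ≤ a := by
      have := hpos a hamem; omega
    have := hlat 1 (a - 1) (by omega)
    rw [htake] at this
    have h1 : a - 1 + 1 = a := by omega
    rw [h1] at this
    have hne2 : a ≠ a - 1 := by omega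
    simp [List.count_cons, hne, hne2] at this
  -- all of r1 is 1
  have hall : ∀ x ∈ r1, x = 1 := by
    intro x hx
    have hxpos : 1 ≤ x := hpos x (by simp [readWord17, List.mem_append, hx])
    have hpw : r1.Pairwise (· ≤ ·) := List.isChain_iff_pairwise.mp hr1row
    rw [← hr1eq] at hpw hx
    rw [List.pairwise_append] at hpw
    rcases List.mem_append.mp hx with h | h
    · have := hpw.2.2 x h a (by simp)
      omega
    · simp at h; omega
  refine ⟨hall, ?_⟩
  rintro ⟨h1, h2, -, -⟩
  have hcnt : ∀ c : ℕ, (readWord17 r1 c1 r2 c2).count c =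
      r1.count c + c1.count c + r2.count c + c2.count c := by
    intro c
    simp [readWord17, List.count_append, List.count_reverse]
    ring
  -- count 1 in r1 = n
  have hc1r1 : r1.count 1 = n := by
    rw [← hr1len]
    exact List.count_eq_length.mpr (fun b hb => (hall b hb).symm)
  have hc2r1 : r1.count 2 = 0 := by
    rw [List.count_eq_zero]
    intro h
    have := hall 2 h; omega
  -- no 1 outside r1
  rw [hcnt 1, hc1r1] at h1
  have hno1r2 : r2.count 1 = 0 := by omega
  have hno1c1 : c1.count 1 = 0 := by omega
  -- r2 head ≥ 2
  obtain ⟨h2hd, r2t, hr2eq⟩ : ∃ x t, r2 = x :: t := by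
    cases r2 with
    | nil => exact absurd rfl hr2ne
    | cons x t => exact ⟨x, t, rfl⟩
  have hhdmem : h2hd ∈ readWord17 r1 c1 r2 c2 := by
    simp [readWord17, hr2eq]
  have hhd2 : 2 ≤ h2hd := by
    have := hpos h2hd hhdmem
    have : h2hd ≠ 1 := by
      intro h
      rw [List.count_eq_zero, hr2eq] at hno1r2
      exact hno1r2 (by simp [h])
    omega
  -- c2 has no 2
  have hc2c2 : c2.count 2 = 0 := by
    rw [List.count_eq_zero]
    intro h
    have hpw := List.isChain_iff_pairwise.mp hcol2
    rw [List.pairwise_cons] at hpw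
    have := hpw.1 2 h
    rw [hr2eq] at this
    simp at this
    omega
  rw [hcnt 2, hc2r1, hc2c2] at h2
  -- column 1 pairwise
  have hpw1 : (c1 ++ [r2.getLastD 0]).Pairwise (· < ·) := by
    have := List.isChain_iff_pairwise.mp hcol1
    exact (List.pairwise_cons.mp this).2
  rw [List.pairwise_append] at hpw1
  by_cases hc : 2 ∈ c1
  · -- c1 contains a 2, so r2's last element > 2
    have hlast : 2 < r2.getLastD 0 := hpw1.2.2 2 hc _ (by simp)
    have hr2last : r2.getLastD 0 = r2.getLast hr2ne := by
      conv_lhs => rw [← List.dropLast_append_getLast hr2ne]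
      rw [List.getLastD_concat]
    have hcount2r2 : r2.count 2 ≤ m - 1 := by
      have heq : r2.dropLast ++ [r2.getLast hr2ne] = r2 := List.dropLast_append_getLast hr2ne
      calc r2.count 2 = (r2.dropLast ++ [r2.getLast hr2ne]).count 2 := by rw [heq]
        _ = r2.dropLast.count 2 + ([r2.getLast hr2ne] : List ℕ).count 2 := List.count_append ..
        _ = r2.dropLast.count 2 := by
            have : r2.getLast hr2ne ≠ 2 := by rw [← hr2last]; omega
            simp [List.count_singleton, this]
        _ ≤ r2.dropLast.length := List.count_le_length ..
        _ = m - 1 := by rw [List.length_dropLast, hr2len]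
    have hcount2c1 : c1.count 2 ≤ 1 := by
      have hnd : c1.Nodup := hpw1.1.imp (fun h => ne_of_lt h)
      exact List.nodup_iff_count_le_one.mp hnd 2
    omega
  · have : c1.count 2 = 0 := List.count_eq_zero.mpr hc
    have := @List.count_le_length _ _ 2 r2
    omega
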